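/- Let a be a positive integer and G a graph on n vertices with minimum degree δ(G) ≥ a. If ρ(G) ≥ n - 2, then e(G) ≥ binomial(n-1, 2) + ⌈a/2⌉. -/

import Mathlib

open SimpleGraph Finset
open scoped Classical

lemma adjMatrix_isHermitian {V : Type*} [Fintype V] (G : SimpleGraph V)
    [DecidableRel G.Adj] : (G.adjMatrix ℝ).IsHermitian := by
  ext i j
  simp [Matrix.conjTranspose_apply, SimpleGraph.adjMatrix_apply, SimpleGraph.adj_comm]

/-- The spectral radius of a graph: the largest eigenvalue of its adjacency matrix. -/
noncomputable def specRad {n : ℕ} (G : SimpleGraph (Fin n)) : ℝ := by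
  classical
  exact ⨆ i, (adjMatrix_isHermitian G).eigenvalues i

/-- If δ(G) ≥ a ≥ 1 and ρ(G) ≥ n - 2, then e(G) ≥ C(n-1,2) + ⌈a/2⌉. -/
theorem edges_ge_of_specRad {n a : ℕ} (ha : 1 ≤ a)
    (G : SimpleGraph (Fin n)) [DecidableRel G.Adj]
    (hδ : a ≤ G.minDegree) (hρ : (n : ℝ) - 2 ≤ specRad G) :
    (n - 1).choose 2 + (a + 1) / 2 ≤ G.edgeFinset.card := by
  -- basic size facts
  have hn1 : 1 ≤ n := by
    by_contra h
    have hn0 : n = 0 := by omega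
    subst hn0
    have : G.minDegree = 0 := by
      simp [SimpleGraph.minDegree]
    omega
  have v0 : Fin n := ⟨0, hn1⟩
  have han : a ≤ n - 1 := by
    have hd := G.minDegree_le_degree v0
    have hlt := G.degree_lt_card_verts v0
    rw [Fintype.card_fin] at hlt
    omega
  have hn2 : 2 ≤ n := by omega
  obtain ⟨m, rfl⟩ : ∃ m, n = m + 2 := ⟨n - 2, by omega⟩
  have hρ' : (m : ℝ) ≤ specRad G := by
    push_cast at hρ
    linarith
  set ρ := specRad G with hρdef
  have hρ0 : (0 : ℝ) ≤ ρ := le_trans (by positivity) hρ'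
  have hA := adjMatrix_isHermitian G
  -- a top eigenvector
  obtain ⟨i₀, hi₀⟩ : ∃ i, hA.eigenvalues i = ⨆ i, hA.eigenvalues i :=
    exists_eq_ciSup_of_finite
  have hspec0 : specRad G = ⨆ i, hA.eigenvalues i := by
    unfold specRad
    congr!
  have hspec : ρ = hA.eigenvalues i₀ := by rw [hρdef, hspec0, ← hi₀]
  set z : Fin (m + 2) → ℝ := ⇑(hA.eigenvectorBasis i₀ : EuclideanSpace ℝ (Fin (m + 2))) with hz
  have hzmul : (G.adjMatrix ℝ).mulVec z = ρ • z := by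
    rw [hspec]
    exact hA.mulVec_eigenvectorBasis i₀
  have hzne : z ≠ 0 := by
    intro h
    apply hA.eigenvectorBasis.orthonormal.ne_zero i₀
    simpa [hz] using h
  obtain ⟨v1, hv1⟩ : ∃ v, z v ≠ 0 := by
    by_contra h
    push_neg at h
    exact hzne (funext h)
  obtain ⟨u, -, hu⟩ := Finset.exists_max_image (univ : Finset (Fin (m + 2)))
    (fun v => |z v|) ⟨v1, mem_univ v1⟩
  have hu' : ∀ v, |z v| ≤ |z u| := fun v => hu v (mem_univ v)
  have hzu : 0 < |z u| := lt_of_lt_of_le (abs_pos.mpr hv1) (hu' v1)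
  set x : Fin (m + 2) → ℝ := fun v => |z v| / |z u| with hxdef
  have hx0 : ∀ v, 0 ≤ x v := fun v => div_nonneg (abs_nonneg _) hzu.le
  have hx1 : ∀ v, x v ≤ 1 := fun v => (div_le_one hzu).mpr (hu' v)
  have hxu : x u = 1 := div_self hzu.ne'
  -- the key eigen-inequality, entrywise for |z|
  have key : ∀ v, ρ * x v ≤ ∑ w ∈ G.neighborFinset v, x w := by
    intro v
    have h1 : ∑ w ∈ G.neighborFinset v, z w = ρ * z v := by
      have := congrFun hzmul v
      rw [SimpleGraph.adjMatrix_mulVec_apply] at this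
      simpa using this
    have h2 : |ρ * z v| ≤ ∑ w ∈ G.neighborFinset v, |z w| := by
      rw [← h1]
      exact Finset.abs_sum_le_sum_abs _ _
    have h3 : ρ * x v = |ρ * z v| / |z u| := by
      rw [abs_mul, abs_of_nonneg hρ0, hxdef]
      ring
    rw [h3]
    rw [div_le_iff₀ hzu]
    calc |ρ * z v| ≤ ∑ w ∈ G.neighborFinset v, |z w| := h2
      _ = (∑ w ∈ G.neighborFinset v, x w) * |z u| := by
          rw [Finset.sum_mul]
          refine Finset.sum_congr rfl fun w _ => ?_
          simp only [hxdef]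
          exact (div_mul_cancel₀ _ hzu.ne').symm
  set S : ℝ := ∑ v, x v with hS
  -- Fact A : ρ + 1 ≤ S
  have factA : ρ + 1 ≤ S := by
    have h1 := key u
    rw [hxu, mul_one] at h1
    have h2 : ∑ w ∈ G.neighborFinset u, x w ≤ ∑ w ∈ univ.erase u, x w := by
      refine Finset.sum_le_sum_of_subset_of_nonneg ?_ fun i _ _ => hx0 i
      intro w hw
      rw [SimpleGraph.mem_neighborFinset] at hw
      exact Finset.mem_erase.mpr ⟨(G.ne_of_adj hw).symm, mem_univ w⟩
    have h3 : ∑ w ∈ univ.erase u, x w + x u = S :=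
      Finset.sum_erase_add univ x (mem_univ u)
    rw [hxu] at h3
    linarith
  -- Fact B : ρ * S ≤ 2e - a * (n - S)
  have hdeg : ∀ w : Fin (m + 2), (a : ℝ) ≤ (G.degree w : ℝ) := by
    intro w
    exact_mod_cast hδ.trans (G.minDegree_le_degree w)
  have colsum : ∀ w : Fin (m + 2), ∑ v, G.adjMatrix ℝ v w = (G.degree w : ℝ) := by
    intro w
    simp only [SimpleGraph.adjMatrix_apply]
    rw [Finset.sum_boole]
    congr 1
    rw [SimpleGraph.degree]
    congr 1
    ext v
    simp [SimpleGraph.adj_comm]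
  have factB : ρ * S ≤ 2 * (G.edgeFinset.card : ℝ) - a * ((m : ℝ) + 2 - S) := by
    have swap : ∑ v, ∑ w ∈ G.neighborFinset v, x w = ∑ w, (G.degree w : ℝ) * x w := by
      have e1 : ∀ v, ∑ w ∈ G.neighborFinset v, x w = ∑ w, G.adjMatrix ℝ v w * x w := by
        intro v
        rw [← SimpleGraph.adjMatrix_mulVec_apply]
        simp [Matrix.mulVec, dotProduct]
      simp_rw [e1]
      rw [Finset.sum_comm]
      refine Finset.sum_congr rfl fun w _ => ?_
      rw [← Finset.sum_mul, colsum w]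
    have per : ∀ w : Fin (m + 2), (G.degree w : ℝ) * x w
        ≤ (G.degree w : ℝ) - a * (1 - x w) := by
      intro w
      have h1 := hx1 w
      have h2 := hx0 w
      nlinarith [hdeg w]
    have hsum2e : ∑ w, (G.degree w : ℝ) = 2 * (G.edgeFinset.card : ℝ) := by
      exact_mod_cast congrArg (Nat.cast : ℕ → ℝ) G.sum_degrees_eq_twice_card_edges
    calc ρ * S = ∑ v, ρ * x v := by rw [hS, Finset.mul_sum]
      _ ≤ ∑ v, ∑ w ∈ G.neighborFinset v, x w := Finset.sum_le_sum fun v _ => key v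
      _ = ∑ w, (G.degree w : ℝ) * x w := swap
      _ ≤ ∑ w, ((G.degree w : ℝ) - a * (1 - x w)) := Finset.sum_le_sum fun w _ => per w
      _ = (∑ w, (G.degree w : ℝ)) - a * ((m : ℝ) + 2 - S) := by
          rw [Finset.sum_sub_distrib, ← Finset.mul_sum, Finset.sum_sub_distrib]
          simp [Finset.card_univ, hS]
      _ = 2 * (G.edgeFinset.card : ℝ) - a * ((m : ℝ) + 2 - S) := by rw [hsum2e]
  -- main count : (n-1)(n-2) + a ≤ 2e
  have main : (m + 1) * m + a ≤ 2 * G.edgeFinset.card := by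
    rcases le_or_gt (a : ℝ) ρ with hcase | hcase
    · have h1 : (ρ - a) * (ρ + 1) ≤ (ρ - a) * S :=
        mul_le_mul_of_nonneg_left factA (by linarith)
      have h2 : (ρ - a) * S ≤ 2 * (G.edgeFinset.card : ℝ) - a * ((m : ℝ) + 2) := by
        nlinarith [factB]
      have hacast : (a : ℝ) ≤ (m : ℝ) + 1 := by exact_mod_cast (by omega : a ≤ m + 1)
      have hreal : ((m : ℝ) + 1) * m + a ≤ 2 * (G.edgeFinset.card : ℝ) := by
        nlinarith [mul_nonneg (sub_nonneg.mpr hρ')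
          (show (0 : ℝ) ≤ ρ + (m : ℝ) + 1 - a by linarith)]
      exact_mod_cast hreal
    · have haeq : a = m + 1 := by
        have : (m : ℝ) < a := lt_of_le_of_lt hρ' hcase
        have : m < a := by exact_mod_cast this
        omega
      have hsum : (m + 2) * a ≤ ∑ v, G.degree v := by
        calc (m + 2) * a = ∑ _v : Fin (m + 2), a := by
              rw [Finset.sum_const, Finset.card_univ, Fintype.card_fin, smul_eq_mul]
          _ ≤ ∑ v, G.degree v :=
              Finset.sum_le_sum fun v _ => hδ.trans (G.minDegree_le_degree v)
      rw [G.sum_degrees_eq_twice_card_edges] at hsum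
      subst haeq
      have hmono : (m + 1) * m + (m + 1) ≤ (m + 2) * (m + 1) := by
        have : (m + 1) * m + (m + 1) = (m + 1) * (m + 1) := by ring
        rw [this]
        exact Nat.mul_le_mul_right _ (by omega)
      omega
  -- conclude via parity arithmetic
  have hsub : m + 2 - 1 = m + 1 := by omega
  rw [hsub]
  have hchoose : 2 * (m + 1).choose 2 = (m + 1) * m := by
    rw [Nat.choose_two_right]
    have h2 : 2 ∣ (m + 1) * ((m + 1) - 1) := by
      rw [Nat.add_sub_cancel, mul_comm]
      exact (Nat.even_mul_succ_self m).two_dvd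
    rw [Nat.mul_div_cancel' h2, Nat.add_sub_cancel]
  generalize hp : (m + 1) * m = p at main hchoose
  omega
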